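/- Let N ≥ 1, let X₁, …, X_N be independent Exp(1)-distributed random variables, and for ρ > 1 set u_j(ρ) = −ln X_j / ln ρ. Let O ⊆ ℝ^N be a set such that inf{ Σ_{j=1}^{N} u_j : u ∈ interior(O) ∩ [0,∞)^N } = inf{ Σ_{j=1}^{N} u_j : u ∈ closure(O) ∩ [0,∞)^N } = d with d < ∞. Then lim_{ρ→∞} ln P{ (u₁(ρ),…,u_N(ρ)) ∈ O } / ln ρ = −d. -/

import Mathlib

open MeasureTheory ProbabilityTheory Filter
open scoped ENNReal NNReal

/-- An Exp(1)-distributed random variable: P{X > t} = e^{−t} for all t ≥ 0. -/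
def IsExp1 {Ω : Type*} [MeasurableSpace Ω] (μ : Measure Ω) (X : Ω → ℝ) : Prop :=
  Measurable X ∧ ∀ t : ℝ, 0 ≤ t → μ {ω | t < X ω} = ENNReal.ofReal (Real.exp (-t))

namespace Exp1Proof

variable {Ω : Type*} [MeasurableSpace Ω] {μ : Measure Ω} [IsProbabilityMeasure μ]

lemma null_nonpos (h : IsExp1 μ X) : μ {ω | X ω ≤ 0} = 0 := by
  have h0 : μ {ω | (0:ℝ) < X ω} = 1 := by simpa using h.2 0 le_rfl
  have hm : MeasurableSet {ω | (0:ℝ) < X ω} := measurableSet_lt measurable_const h.1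
  have hs : {ω | X ω ≤ 0} = {ω | (0:ℝ) < X ω}ᶜ := by ext ω; simp [not_lt]
  rw [hs, measure_compl hm (measure_ne_top μ _), measure_univ, h0, tsub_self]

lemma meas_le (h : IsExp1 μ X) {t : ℝ} (ht : 0 ≤ t) :
    μ {ω | X ω ≤ t} ≤ ENNReal.ofReal t := by
  have hm : MeasurableSet {ω | t < X ω} := measurableSet_lt measurable_const h.1
  have hs : {ω | X ω ≤ t} = {ω | t < X ω}ᶜ := by ext ω; simp [not_lt]
  rw [hs, measure_compl hm (measure_ne_top μ _), measure_univ, h.2 t ht,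
    ← ENNReal.ofReal_one, ← ENNReal.ofReal_sub _ (Real.exp_nonneg _)]
  exact ENNReal.ofReal_le_ofReal (by nlinarith [Real.add_one_le_exp (-t)])

lemma meas_Ioc (h : IsExp1 μ X) {a b : ℝ} (ha : 0 ≤ a) (hab : a ≤ b) :
    μ (X ⁻¹' Set.Ioc a b) = ENNReal.ofReal (Real.exp (-a) - Real.exp (-b)) := by
  have hb : 0 ≤ b := ha.trans hab
  have hset : X ⁻¹' Set.Ioc a b = {ω | a < X ω} \ {ω | b < X ω} := by
    ext ω; simp only [Set.mem_preimage, Set.mem_Ioc, Set.mem_diff, Set.mem_setOf_eq, not_lt]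
  have hsub : {ω | b < X ω} ⊆ {ω | a < X ω} := fun ω hω => lt_of_le_of_lt hab hω
  rw [hset, measure_diff hsub
      (measurableSet_lt measurable_const h.1).nullMeasurableSet (measure_ne_top μ _),
    h.2 a ha, h.2 b hb, ← ENNReal.ofReal_sub _ (Real.exp_nonneg _)]

lemma meas_u_ge (h : IsExp1 μ X) {ρ : ℝ} (hρ : 1 < ρ) (c : ℝ) :
    μ {ω | c ≤ -Real.log (X ω) / Real.log ρ} ≤ ENNReal.ofReal (ρ ^ (-(max c 0))) := by
  have hρ0 : (0:ℝ) < ρ := lt_trans one_pos hρ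
  have hL : 0 < Real.log ρ := Real.log_pos hρ
  rcases le_or_gt c 0 with hc | hc
  · calc μ _ ≤ 1 := prob_le_one
      _ = ENNReal.ofReal (ρ ^ (-(max c 0))) := by
          rw [max_eq_right hc]; simp
  · have hmax : max c 0 = c := max_eq_left hc.le
    rw [hmax]
    have hsub : {ω | c ≤ -Real.log (X ω) / Real.log ρ} ⊆
        {ω | X ω ≤ 0} ∪ {ω | X ω ≤ ρ ^ (-c)} := by
      intro ω hω
      rcases le_or_gt (X ω) 0 with h0 | h0
      · exact Or.inl h0
      · refine Or.inr ?_
        have h1 : c * Real.log ρ ≤ -Real.log (X ω) := (le_div_iff₀ hL).mp hω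
        have hlog : Real.log (X ω) ≤ Real.log (ρ ^ (-c)) := by
          rw [Real.log_rpow hρ0]; linarith
        exact (Real.log_le_log_iff h0 (Real.rpow_pos_of_pos hρ0 _)).mp hlog
    calc μ _ ≤ μ {ω | X ω ≤ 0} + μ {ω | X ω ≤ ρ ^ (-c)} :=
          (measure_mono hsub).trans (measure_union_le _ _)
      _ ≤ ENNReal.ofReal (ρ ^ (-c)) := by
          rw [null_nonpos h, zero_add]
          exact meas_le h (Real.rpow_nonneg hρ0.le _)

lemma meas_u_le_neg (h : IsExp1 μ X) {ρ : ℝ} (hρ : 1 < ρ) {δ : ℝ} (hδ : 0 < δ) :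
    μ {ω | -Real.log (X ω) / Real.log ρ ≤ -δ} ≤
      ENNReal.ofReal (Real.exp (-(ρ ^ δ / 2))) := by
  have hρ0 : (0:ℝ) < ρ := lt_trans one_pos hρ
  have hL : 0 < Real.log ρ := Real.log_pos hρ
  have hsub : {ω | -Real.log (X ω) / Real.log ρ ≤ -δ} ⊆
      {ω | X ω ≤ 0} ∪ {ω | ρ ^ δ / 2 < X ω} := by
    intro ω hω
    rcases le_or_gt (X ω) 0 with h0 | h0
    · exact Or.inl h0
    · refine Or.inr ?_
      have h1 : -Real.log (X ω) ≤ -δ * Real.log ρ := (div_le_iff₀ hL).mp hω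
      have h2 : Real.log (ρ ^ δ) ≤ Real.log (X ω) := by
        rw [Real.log_rpow hρ0]; linarith
      have hX : ρ ^ δ ≤ X ω :=
        (Real.log_le_log_iff (Real.rpow_pos_of_pos hρ0 _) h0).mp h2
      have h3 : (0:ℝ) < ρ ^ δ := Real.rpow_pos_of_pos hρ0 _
      show ρ ^ δ / 2 < X ω
      linarith
  calc μ _ ≤ μ {ω | X ω ≤ 0} + μ {ω | ρ ^ δ / 2 < X ω} :=
        (measure_mono hsub).trans (measure_union_le _ _)
    _ = ENNReal.ofReal (Real.exp (-(ρ ^ δ / 2))) := by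
        rw [null_nonpos h, zero_add, h.2 _ (by positivity)]

lemma rpow_sum {ρ : ℝ} (hρ : 0 < ρ) {N : ℕ} (f : Fin N → ℝ) :
    ρ ^ (∑ j, f j) = ∏ j, ρ ^ (f j) := by
  simp only [Real.rpow_def_of_pos hρ, Finset.mul_sum, Real.exp_sum]

lemma lemA {N : ℕ} {O : Set (Fin N → ℝ)} {d K : ℝ}
    (hd : ∀ u ∈ closure O, (∀ j, 0 ≤ u j) → d ≤ ∑ j, u j)
    {ε : ℝ} (hε : 0 < ε) :
    ∃ δ : ℝ, 0 < δ ∧ ∀ u ∈ closure O, (∀ j, -δ ≤ u j) → (∀ j, u j ≤ K) →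
      d - ε ≤ ∑ j, max (u j) 0 := by
  by_contra hcon
  push_neg at hcon
  have hcon' : ∀ n : ℕ, ∃ u, u ∈ closure O ∧ (∀ j, -(1/((n:ℝ)+1)) ≤ u j) ∧
      (∀ j, u j ≤ K) ∧ ∑ j, max (u j) 0 < d - ε := by
    intro n
    obtain ⟨u, h1, h2, h3, h4⟩ := hcon (1/((n:ℝ)+1)) (by positivity)
    exact ⟨u, h1, h2, h3, h4⟩
  choose f hfO hfneg hfK hfsum using hcon'
  set C : Set (Fin N → ℝ) := Set.pi Set.univ (fun _ => Set.Icc (-1 : ℝ) K) with hCdef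
  have hC : IsCompact C := isCompact_univ_pi fun _ => isCompact_Icc
  have hfC : ∀ n, f n ∈ C := by
    intro n
    rw [hCdef, Set.mem_univ_pi]
    intro j
    refine ⟨le_trans ?_ (hfneg n j), hfK n j⟩
    have h1 : (1:ℝ)/((n:ℝ)+1) ≤ 1 := by
      rw [div_le_one (by positivity)]
      linarith [Nat.cast_nonneg (α := ℝ) n]
    linarith
  obtain ⟨u, huC, φ, hφ, htend⟩ := hC.tendsto_subseq hfC
  have huO : u ∈ closure O :=
    isClosed_closure.mem_of_tendsto htend (Eventually.of_forall fun n => hfO _)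
  have hcoord : ∀ j, Tendsto (fun n => f (φ n) j) atTop (nhds (u j)) :=
    fun j => tendsto_pi_nhds.mp htend j
  have hupos : ∀ j, 0 ≤ u j := by
    intro j
    have h1 : Tendsto (fun n : ℕ => -(1/((φ n : ℝ)+1))) atTop (nhds 0) := by
      have h2 := (tendsto_one_div_add_atTop_nhds_zero_nat (𝕜 := ℝ)).comp hφ.tendsto_atTop
      have h3 := h2.neg
      simpa using h3
    exact le_of_tendsto_of_tendsto' h1 (hcoord j) fun n => hfneg (φ n) j
  have hsum : ∑ j, u j ≤ d - ε := by
    have htsum : Tendsto (fun n => ∑ j, max (f (φ n) j) 0) atTop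
        (nhds (∑ j, max (u j) 0)) :=
      tendsto_finset_sum _ fun j _ => (hcoord j).max tendsto_const_nhds
    have hle := le_of_tendsto htsum (Eventually.of_forall fun n => (hfsum (φ n)).le)
    calc ∑ j, u j = ∑ j, max (u j) 0 :=
          Finset.sum_congr rfl fun j _ => (max_eq_left (hupos j)).symm
      _ ≤ d - ε := hle
  have := hd u huO hupos
  linarith

lemma lowerBound {N : ℕ} {X : Fin N → Ω → ℝ} (hX : ∀ j, IsExp1 μ (X j))
    (hindep : iIndepFun X μ)
    {O : Set (Fin N → ℝ)} {ustar : Fin N → ℝ} {r : ℝ} (hr : 0 < r)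
    (hball : Metric.ball ustar r ⊆ O) (hupos : ∀ j, 0 ≤ ustar j)
    {c : ℝ} (hc : ∑ j, ustar j < c) :
    ∀ᶠ ρ : ℝ in atTop, ENNReal.ofReal (ρ ^ (-c)) ≤
      μ {ω | (fun j => -Real.log (X j ω) / Real.log ρ) ∈ O} := by
  have hcond2 : ∀ᶠ ρ : ℝ in atTop, ρ ^ (-(r/2)) < 1/4 :=
    (tendsto_rpow_neg_atTop (by linarith : 0 < r/2)).eventually_lt_const (by norm_num)
  have hcond3 : ∀ᶠ ρ : ℝ in atTop,
      (1:ℝ) ≤ (1/(4*Real.exp 1))^N * ρ ^ (c - ∑ j, ustar j) := by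
    have h1 : Tendsto (fun ρ:ℝ => (1/(4*Real.exp 1))^N * ρ ^ (c - ∑ j, ustar j))
        atTop atTop := by
      refine Tendsto.const_mul_atTop (by positivity) (tendsto_rpow_atTop (by linarith))
    exact h1.eventually_ge_atTop 1
  filter_upwards [eventually_gt_atTop 1, hcond2, hcond3] with ρ hρ h14 hge
  have hρ0 : (0:ℝ) < ρ := lt_trans one_pos hρ
  have hL : 0 < Real.log ρ := Real.log_pos hρ
  set a : Fin N → ℝ := fun j => ρ ^ (-(ustar j + r/2)) with hadef
  set b : Fin N → ℝ := fun j => ρ ^ (-(ustar j)) / 2 with hbdef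
  have hab : ∀ j, a j ≤ b j := by
    intro j
    have h1 : a j = ρ ^ (-(ustar j)) * ρ ^ (-(r/2)) := by
      rw [hadef, ← Real.rpow_add hρ0]; ring_nf
    have h2 : (0:ℝ) < ρ ^ (-(ustar j)) := Real.rpow_pos_of_pos hρ0 _
    rw [h1, hbdef]
    nlinarith
  have ha0 : ∀ j, 0 ≤ a j := fun j => (Real.rpow_pos_of_pos hρ0 _).le
  -- the box is inside O
  have hsub : (⋂ j, X j ⁻¹' Set.Ioc (a j) (b j)) ⊆
      {ω | (fun j => -Real.log (X j ω) / Real.log ρ) ∈ O} := by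
    intro ω hω
    simp only [Set.mem_iInter, Set.mem_preimage, Set.mem_Ioc] at hω
    refine hball ?_
    rw [Metric.mem_ball, dist_pi_lt_iff hr]
    intro j
    obtain ⟨haj, hbj⟩ := hω j
    have hXpos : 0 < X j ω := lt_trans (Real.rpow_pos_of_pos hρ0 _) haj
    have h2 : Real.log (ρ ^ (-(ustar j)) / 2) =
        -(ustar j) * Real.log ρ - Real.log 2 := by
      rw [Real.log_div (ne_of_gt (Real.rpow_pos_of_pos hρ0 _)) two_ne_zero,
        Real.log_rpow hρ0]
    have hlog2 : (0:ℝ) < Real.log 2 := Real.log_pos (by norm_num)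
    have h1 : Real.log (X j ω) < -(ustar j) * Real.log ρ := by
      have h3 : Real.log (X j ω) ≤ Real.log (ρ ^ (-(ustar j)) / 2) :=
        Real.log_le_log hXpos hbj
      rw [h2] at h3; linarith
    have h3 : -(ustar j + r/2) * Real.log ρ < Real.log (X j ω) := by
      have h4 := Real.log_lt_log (Real.rpow_pos_of_pos hρ0 _) haj
      rwa [Real.log_rpow hρ0] at h4
    have hv1 : ustar j < -Real.log (X j ω) / Real.log ρ := by
      rw [lt_div_iff₀ hL]; nlinarith
    have hv2 : -Real.log (X j ω) / Real.log ρ < ustar j + r/2 := by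
      rw [div_lt_iff₀ hL]; nlinarith
    rw [Real.dist_eq, abs_lt]
    constructor <;> nlinarith
  -- product formula
  have hprod : μ (⋂ j, X j ⁻¹' Set.Ioc (a j) (b j)) =
      ∏ j, μ (X j ⁻¹' Set.Ioc (a j) (b j)) := by
    have h := hindep.measure_inter_preimage_eq_mul Finset.univ
      (sets := fun j => Set.Ioc (a j) (b j)) (fun i _ => measurableSet_Ioc)
    simpa using h
  have hfac : ∀ j, ENNReal.ofReal (ρ ^ (-(ustar j)) * (1/(4*Real.exp 1))) ≤
      μ (X j ⁻¹' Set.Ioc (a j) (b j)) := by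
    intro j
    rw [meas_Ioc (hX j) (ha0 j) (hab j)]
    refine ENNReal.ofReal_le_ofReal ?_
    have hexp : Real.exp (-(a j)) = Real.exp (-(b j)) * Real.exp (b j - a j) := by
      rw [← Real.exp_add]; ring_nf
    have h5 : (0:ℝ) < Real.exp (-(b j)) := Real.exp_pos _
    have h6 : b j - a j + 1 ≤ Real.exp (b j - a j) := Real.add_one_le_exp _
    have h7 : Real.exp (-(b j)) * (b j - a j) ≤ Real.exp (-(a j)) - Real.exp (-(b j)) := by
      rw [hexp]; nlinarith
    -- b j ≤ 1 so exp(-(b j)) ≥ exp(-1) = 1 / exp 1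
    have hble : ρ ^ (-(ustar j)) ≤ 1 :=
      Real.rpow_le_one_of_one_le_of_nonpos hρ.le (by linarith [hupos j])
    have hb1 : b j ≤ 1 := by rw [hbdef]; dsimp only; linarith
    have h8 : Real.exp (-1 : ℝ) ≤ Real.exp (-(b j)) := Real.exp_le_exp.mpr (by linarith)
    have h9 : Real.exp (-1 : ℝ) = 1 / Real.exp 1 := by
      rw [Real.exp_neg]; ring
    -- b j - a j ≥ ρ^(-(ustar j)) / 4
    have h10 : a j = ρ ^ (-(ustar j)) * ρ ^ (-(r/2)) := by
      rw [hadef, ← Real.rpow_add hρ0]; ring_nf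
    have h11 : (0:ℝ) < ρ ^ (-(ustar j)) := Real.rpow_pos_of_pos hρ0 _
    have h12 : ρ ^ (-(ustar j)) / 4 ≤ b j - a j := by
      rw [hbdef, h10]; dsimp only; nlinarith [Real.rpow_nonneg hρ0.le (-(r/2))]
    have hexp1 : (0:ℝ) < Real.exp 1 := Real.exp_pos 1
    calc ρ ^ (-(ustar j)) * (1/(4*Real.exp 1))
        = (1/Real.exp 1) * (ρ ^ (-(ustar j)) / 4) := by ring
      _ ≤ Real.exp (-(b j)) * (b j - a j) := by
          rw [← h9]; exact mul_le_mul h8 h12 (by positivity) h5.le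
      _ ≤ Real.exp (-(a j)) - Real.exp (-(b j)) := h7
  calc ENNReal.ofReal (ρ ^ (-c)) ≤
      ENNReal.ofReal (∏ j, (ρ ^ (-(ustar j)) * (1/(4*Real.exp 1)))) := by
        refine ENNReal.ofReal_le_ofReal ?_
        rw [Finset.prod_mul_distrib, Finset.prod_const, Finset.card_univ,
          Fintype.card_fin]
        have hprodneg : (∏ j : Fin N, ρ ^ (-ustar j)) = ρ ^ (-∑ j : Fin N, ustar j) := by
          rw [← rpow_sum hρ0]
          congr 1
          rw [Finset.sum_neg_distrib]
        rw [hprodneg]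
        have hsplit : ρ ^ (-∑ j : Fin N, ustar j) = ρ ^ (-c) * ρ ^ (c - ∑ j : Fin N, ustar j) := by
          rw [← Real.rpow_add hρ0]; ring_nf
        rw [hsplit]
        have h0 : (0:ℝ) < ρ ^ (-c) := Real.rpow_pos_of_pos hρ0 _
        nlinarith [mul_le_mul_of_nonneg_left hge h0.le]
    _ ≤ ∏ j, μ (X j ⁻¹' Set.Ioc (a j) (b j)) := by
        rw [ENNReal.ofReal_prod_of_nonneg (fun j _ => by positivity)]
        exact Finset.prod_le_prod' fun j _ => hfac j
    _ = μ (⋂ j, X j ⁻¹' Set.Ioc (a j) (b j)) := hprod.symm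
    _ ≤ _ := measure_mono hsub

lemma upperBound {N : ℕ} {X : Fin N → Ω → ℝ} (hX : ∀ j, IsExp1 μ (X j))
    (hindep : iIndepFun X μ)
    {O : Set (Fin N → ℝ)} {d : ℝ} (hd0 : 0 ≤ d)
    (hdle : ∀ u ∈ closure O, (∀ j, 0 ≤ u j) → d ≤ ∑ j, u j)
    {ε' : ℝ} (hε' : 0 < ε') :
    ∀ᶠ ρ : ℝ in atTop,
      μ {ω | (fun j => -Real.log (X j ω) / Real.log ρ) ∈ O} ≤
        ENNReal.ofReal (ρ ^ (-(d - ε'))) := by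
  classical
  obtain ⟨δ₀, hδ₀, hA⟩ := lemA (K := d + 2) (ε := ε'/2) hdle (half_pos hε')
  set δ₁ : ℝ := δ₀ / 2 with hδ₁def
  have hδ₁ : 0 < δ₁ := by positivity
  set γ : ℝ := min (δ₀/2) (ε' / (4*((N:ℝ)+1))) with hγdef
  have hγ : 0 < γ := lt_min (by positivity) (by positivity)
  have hγδ : γ ≤ δ₀/2 := min_le_left _ _
  have hγN : (N:ℝ) * γ ≤ ε'/4 := by
    have h1 : γ ≤ ε'/(4*((N:ℝ)+1)) := min_le_right _ _
    have h2 : (0:ℝ) ≤ (N:ℝ) := Nat.cast_nonneg N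
    have h3 : (0:ℝ) < 4*((N:ℝ)+1) := by positivity
    have h4 : (N:ℝ) * γ ≤ (N:ℝ) * (ε'/(4*((N:ℝ)+1))) := by gcongr
    have h5 : (N:ℝ) * (ε'/(4*((N:ℝ)+1))) ≤ ε'/4 := by
      rw [← mul_div_assoc, div_le_div_iff₀ h3 (by norm_num)]
      nlinarith
    linarith
  set lo : ℤ := ⌊-δ₁/γ⌋ with hlodef
  set hi : ℤ := ⌊(d+1)/γ⌋ with hhidef
  set G : Finset (Fin N → ℤ) := Fintype.piFinset (fun _ => Finset.Icc lo hi) with hGdef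
  set G' : Finset (Fin N → ℤ) :=
    G.filter (fun c => d - 3*ε'/4 ≤ ∑ j, max (γ * (c j : ℝ)) 0) with hG'def
  -- eventual smallness conditions
  have hcond1 : ∀ᶠ ρ:ℝ in atTop, (N:ℝ) * ρ^(-(1+ε')) ≤ 1/3 := by
    have h := (tendsto_rpow_neg_atTop (by linarith : (0:ℝ) < 1+ε')).const_mul (N:ℝ)
    rw [mul_zero] at h
    exact (h.eventually_lt_const (by norm_num)).mono fun x hx => hx.le
  have hcond2 : ∀ᶠ ρ:ℝ in atTop, (G.card:ℝ) * ρ^(-(ε'/4)) ≤ 1/3 := by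
    have h := (tendsto_rpow_neg_atTop (by positivity : (0:ℝ) < ε'/4)).const_mul (G.card:ℝ)
    rw [mul_zero] at h
    exact (h.eventually_lt_const (by norm_num)).mono fun x hx => hx.le
  have hcond3 : ∀ᶠ ρ:ℝ in atTop,
      (N:ℝ) * (ρ ^ (d - ε') * Real.exp (-(ρ^δ₁/2))) ≤ 1/3 := by
    have hbase : Tendsto (fun y:ℝ => y ^ ((d-ε')/δ₁) * Real.exp (-(1/2) * y))
        atTop (nhds 0) :=
      tendsto_rpow_mul_exp_neg_mul_atTop_nhds_zero _ _ (by norm_num)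
    have h3 := (hbase.comp (tendsto_rpow_atTop hδ₁)).const_mul (N:ℝ)
    rw [mul_zero] at h3
    have h2 : Tendsto (fun ρ:ℝ => (N:ℝ) * (ρ ^ (d - ε') * Real.exp (-(ρ^δ₁/2))))
        atTop (nhds 0) := by
      refine Tendsto.congr' ?_ h3
      filter_upwards [eventually_gt_atTop 0] with ρ hρ0
      simp only [Function.comp]
      rw [← Real.rpow_mul hρ0.le]
      have he : δ₁ * ((d-ε')/δ₁) = d - ε' := by field_simp
      rw [he]
      congr 2
      ring
    exact (h2.eventually_lt_const (by norm_num)).mono fun x hx => hx.le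
  filter_upwards [eventually_gt_atTop 1, hcond1, hcond2, hcond3] with ρ hρ h1 h2 h3
  have hρ0 : (0:ℝ) < ρ := lt_trans one_pos hρ
  have hL : 0 < Real.log ρ := Real.log_pos hρ
  set A₁ : Set Ω := ⋃ j, {ω | d+1 ≤ -Real.log (X j ω) / Real.log ρ} with hA₁def
  set A₂ : Set Ω := ⋃ j, {ω | -Real.log (X j ω) / Real.log ρ ≤ -δ₁} with hA₂def
  set T : (Fin N → ℤ) → Set Ω := fun c =>
    ⋂ j, X j ⁻¹' {x | γ*(c j:ℝ) ≤ -Real.log x / Real.log ρ} with hTdef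
  -- covering
  have hcover : {ω | (fun j => -Real.log (X j ω) / Real.log ρ) ∈ O} ⊆
      A₁ ∪ A₂ ∪ ⋃ c ∈ G', T c := by
    intro ω hω
    by_cases hcase1 : ∃ j, d+1 ≤ -Real.log (X j ω) / Real.log ρ
    · exact Or.inl (Or.inl (Set.mem_iUnion.mpr ⟨hcase1.choose, hcase1.choose_spec⟩))
    by_cases hcase2 : ∃ j, -Real.log (X j ω) / Real.log ρ ≤ -δ₁
    · exact Or.inl (Or.inr (Set.mem_iUnion.mpr ⟨hcase2.choose, hcase2.choose_spec⟩))
    push_neg at hcase1 hcase2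
    refine Or.inr ?_
    set v : Fin N → ℝ := fun j => -Real.log (X j ω) / Real.log ρ with hvdef
    set c : Fin N → ℤ := fun j => ⌊v j / γ⌋ with hcdef
    have hcγ_le : ∀ j, γ * (c j:ℝ) ≤ v j := by
      intro j
      have hf := Int.floor_le (v j / γ)
      calc γ * (c j:ℝ) ≤ γ * (v j / γ) := by gcongr
        _ = v j := by field_simp
    have hclow : ∀ j, v j - γ ≤ γ * (c j:ℝ) := by
      intro j
      have hf := Int.sub_one_lt_floor (v j / γ)
      have h6 : γ * (v j / γ - 1) < γ * (c j:ℝ) := by gcongr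
      have h7 : γ * (v j / γ - 1) = v j - γ := by field_simp
      linarith
    have hcG : c ∈ G := by
      rw [hGdef, Fintype.mem_piFinset]
      intro j
      rw [Finset.mem_Icc]
      constructor
      · exact Int.floor_le_floor ((div_le_div_iff_of_pos_right hγ).mpr (hcase2 j).le)
      · exact Int.floor_le_floor ((div_le_div_iff_of_pos_right hγ).mpr (hcase1 j).le)
    have hsumv : d - ε'/2 ≤ ∑ j, max (v j) 0 := by
      refine hA v (subset_closure hω) ?_ ?_
      · intro j
        have h8 : -δ₁ < v j := hcase2 j
        rw [hδ₁def] at h8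
        linarith [hδ₀]
      · intro j; linarith [hcase1 j]
    have hsumc : d - 3*ε'/4 ≤ ∑ j, max (γ*(c j:ℝ)) 0 := by
      have hperj : ∀ j, max (v j) 0 - γ ≤ max (γ*(c j:ℝ)) 0 := by
        intro j
        have h9 : v j ≤ γ*(c j:ℝ) + γ := by linarith [hclow j]
        have hmax : max (v j) 0 ≤ max (γ*(c j:ℝ)) 0 + γ := by
          refine max_le (h9.trans (by gcongr; exact le_max_left _ _)) ?_
          have := le_max_right (γ*(c j:ℝ)) 0
          linarith
        linarith
      have h10 := Finset.sum_le_sum (fun j (_ : j ∈ Finset.univ) => hperj j)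
      rw [Finset.sum_sub_distrib, Finset.sum_const, Finset.card_univ,
        Fintype.card_fin, nsmul_eq_mul] at h10
      linarith [hγN, hsumv]
    refine Set.mem_biUnion (Finset.mem_filter.mpr ⟨hcG, hsumc⟩) ?_
    exact Set.mem_iInter.mpr fun j => hcγ_le j
  -- bounds on the three parts
  have hmaxd : max (d+1) 0 = d+1 := max_eq_left (by linarith)
  have hbA₁ : μ A₁ ≤ ENNReal.ofReal ((N:ℝ) * ρ ^ (-(d+1))) := by
    calc μ A₁ ≤ ∑ j : Fin N, μ {ω | d+1 ≤ -Real.log (X j ω) / Real.log ρ} :=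
          measure_iUnion_fintype_le μ _
      _ ≤ ∑ _j : Fin N, ENNReal.ofReal (ρ ^ (-(d+1))) := by
          refine Finset.sum_le_sum fun j _ => ?_
          have := meas_u_ge (hX j) hρ (d+1)
          rwa [hmaxd] at this
      _ = ENNReal.ofReal ((N:ℝ) * ρ ^ (-(d+1))) := by
          rw [Finset.sum_const, Finset.card_univ, Fintype.card_fin, nsmul_eq_mul,
            ← ENNReal.ofReal_natCast N, ← ENNReal.ofReal_mul (Nat.cast_nonneg N)]
  have hbA₂ : μ A₂ ≤ ENNReal.ofReal ((N:ℝ) * Real.exp (-(ρ^δ₁/2))) := by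
    calc μ A₂ ≤ ∑ j : Fin N, μ {ω | -Real.log (X j ω) / Real.log ρ ≤ -δ₁} :=
          measure_iUnion_fintype_le μ _
      _ ≤ ∑ _j : Fin N, ENNReal.ofReal (Real.exp (-(ρ^δ₁/2))) :=
          Finset.sum_le_sum fun j _ => meas_u_le_neg (hX j) hρ hδ₁
      _ = ENNReal.ofReal ((N:ℝ) * Real.exp (-(ρ^δ₁/2))) := by
          rw [Finset.sum_const, Finset.card_univ, Fintype.card_fin, nsmul_eq_mul,
            ← ENNReal.ofReal_natCast N, ← ENNReal.ofReal_mul (Nat.cast_nonneg N)]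
  have hbT : ∀ c ∈ G', μ (T c) ≤ ENNReal.ofReal (ρ ^ (-(d - 3*ε'/4))) := by
    intro c hc
    have hsum := (Finset.mem_filter.mp hc).2
    have hmeas : ∀ j : Fin N,
        MeasurableSet {x : ℝ | γ*(c j:ℝ) ≤ -Real.log x / Real.log ρ} :=
      fun j => measurableSet_le measurable_const
        ((Real.measurable_log.neg).div_const _)
    have hprod : μ (T c) =
        ∏ j, μ (X j ⁻¹' {x | γ*(c j:ℝ) ≤ -Real.log x / Real.log ρ}) := by
      have h := hindep.measure_inter_preimage_eq_mul Finset.univ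
        (sets := fun j => {x | γ*(c j:ℝ) ≤ -Real.log x / Real.log ρ})
        (fun i _ => hmeas i)
      simpa [hTdef] using h
    rw [hprod]
    calc ∏ j, μ (X j ⁻¹' {x | γ*(c j:ℝ) ≤ -Real.log x / Real.log ρ})
        ≤ ∏ j, ENNReal.ofReal (ρ^(-(max (γ*(c j:ℝ)) 0))) :=
          Finset.prod_le_prod' fun j _ => meas_u_ge (hX j) hρ _
      _ = ENNReal.ofReal (∏ j, ρ^(-(max (γ*(c j:ℝ)) 0))) :=
          (ENNReal.ofReal_prod_of_nonneg fun j _ => by positivity).symm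
      _ = ENNReal.ofReal (ρ ^ (∑ j, -(max (γ*(c j:ℝ)) 0))) := by rw [rpow_sum hρ0]
      _ ≤ ENNReal.ofReal (ρ ^ (-(d - 3*ε'/4))) := by
          refine ENNReal.ofReal_le_ofReal ?_
          refine Real.rpow_le_rpow_of_exponent_le hρ.le ?_
          rw [Finset.sum_neg_distrib]
          linarith
  -- combine
  have hbU : μ (⋃ c ∈ G', T c) ≤
      ENNReal.ofReal ((G.card:ℝ) * ρ ^ (-(d - 3*ε'/4))) := by
    calc μ (⋃ c ∈ G', T c) ≤ ∑ c ∈ G', μ (T c) := measure_biUnion_finset_le _ _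
      _ ≤ ∑ _c ∈ G', ENNReal.ofReal (ρ ^ (-(d - 3*ε'/4))) :=
          Finset.sum_le_sum hbT
      _ = (G'.card : ℝ≥0∞) * ENNReal.ofReal (ρ ^ (-(d - 3*ε'/4))) := by
          rw [Finset.sum_const, nsmul_eq_mul]
      _ ≤ (G.card : ℝ≥0∞) * ENNReal.ofReal (ρ ^ (-(d - 3*ε'/4))) := by
          gcongr
          exact Finset.filter_subset _ _
      _ = ENNReal.ofReal ((G.card:ℝ) * ρ ^ (-(d - 3*ε'/4))) := by
          rw [← ENNReal.ofReal_natCast G.card,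
            ← ENNReal.ofReal_mul (Nat.cast_nonneg _)]
  -- final real arithmetic
  have hsplit1 : ρ ^ (-(d+1)) = ρ^(-(1+ε')) * ρ^(-(d-ε')) := by
    rw [← Real.rpow_add hρ0]; ring_nf
  have hsplit2 : ρ ^ (-(d - 3*ε'/4)) = ρ^(-(ε'/4)) * ρ^(-(d-ε')) := by
    rw [← Real.rpow_add hρ0]; ring_nf
  have hsplit3 : Real.exp (-(ρ^δ₁/2)) = (ρ ^ (d - ε') * Real.exp (-(ρ^δ₁/2))) * ρ^(-(d-ε')) := by
    have hx : ρ ^ (d-ε') * ρ^(-(d-ε')) = 1 := by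
      rw [← Real.rpow_add hρ0]; simp
    linear_combination (-Real.exp (-(ρ^δ₁/2))) * hx
  have hrpos : (0:ℝ) < ρ^(-(d-ε')) := Real.rpow_pos_of_pos hρ0 _
  have hfinal : (N:ℝ) * ρ ^ (-(d+1)) + (N:ℝ) * Real.exp (-(ρ^δ₁/2)) +
      (G.card:ℝ) * ρ ^ (-(d - 3*ε'/4)) ≤ ρ ^ (-(d-ε')) := by
    have e1 : (N:ℝ) * ρ ^ (-(d+1)) ≤ (1/3) * ρ^(-(d-ε')) := by
      rw [hsplit1, ← mul_assoc]
      exact mul_le_mul_of_nonneg_right h1 hrpos.le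
    have e2 : (N:ℝ) * Real.exp (-(ρ^δ₁/2)) ≤ (1/3) * ρ^(-(d-ε')) := by
      rw [hsplit3, ← mul_assoc]
      exact mul_le_mul_of_nonneg_right (by linarith [h3]) hrpos.le
    have e3 : (G.card:ℝ) * ρ ^ (-(d - 3*ε'/4)) ≤ (1/3) * ρ^(-(d-ε')) := by
      rw [hsplit2, ← mul_assoc]
      exact mul_le_mul_of_nonneg_right h2 hrpos.le
    linarith
  calc μ {ω | (fun j => -Real.log (X j ω) / Real.log ρ) ∈ O}
      ≤ μ (A₁ ∪ A₂ ∪ ⋃ c ∈ G', T c) := measure_mono hcover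
    _ ≤ μ (A₁ ∪ A₂) + μ (⋃ c ∈ G', T c) := measure_union_le _ _
    _ ≤ (μ A₁ + μ A₂) + μ (⋃ c ∈ G', T c) := by
        gcongr
        exact measure_union_le _ _
    _ ≤ (ENNReal.ofReal ((N:ℝ) * ρ ^ (-(d+1))) +
          ENNReal.ofReal ((N:ℝ) * Real.exp (-(ρ^δ₁/2)))) +
          ENNReal.ofReal ((G.card:ℝ) * ρ ^ (-(d - 3*ε'/4))) := by
        gcongr
    _ = ENNReal.ofReal ((N:ℝ) * ρ ^ (-(d+1)) + (N:ℝ) * Real.exp (-(ρ^δ₁/2)) +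
          (G.card:ℝ) * ρ ^ (-(d - 3*ε'/4))) := by
        rw [← ENNReal.ofReal_add (by positivity) (by positivity),
          ← ENNReal.ofReal_add (by positivity)
            (mul_nonneg (Nat.cast_nonneg _) (Real.rpow_nonneg hρ0.le _))]
    _ ≤ ENNReal.ofReal (ρ ^ (-(d-ε'))) := ENNReal.ofReal_le_ofReal hfinal

end Exp1Proof

/-- Lemma 2 of the paper: if X₁,…,X_N are i.i.d. Exp(1) and
u_j(ρ) = −ln X_j/ln ρ are their exponential orders, and O ⊆ ℝ^N is a set such that the
infimum of Σ u_j over interior(O) ∩ ℝ₊^N and over closure(O) ∩ ℝ₊^N are both equal to a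
finite d (the interior intersection being nonempty, i.e. d < ∞), then
P{(u₁(ρ),…,u_N(ρ)) ∈ O} ≐ ρ^{−d}, i.e. ln P{u(ρ) ∈ O}/ln ρ → −d as ρ → ∞. -/
theorem exponential_orders_set_probability_exponent {Ω : Type*} [MeasurableSpace Ω]
    (μ : Measure Ω) [IsProbabilityMeasure μ]
    (N : ℕ) (hN : 1 ≤ N) (X : Fin N → Ω → ℝ) (hX : ∀ j, IsExp1 μ (X j))
    (hindep : iIndepFun X μ)
    (O : Set (Fin N → ℝ)) (d : ℝ)
    (hne : ((fun u : Fin N → ℝ => ∑ j, u j) ''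
        (interior O ∩ {u | ∀ j, 0 ≤ u j})).Nonempty)
    (hint : sInf ((fun u : Fin N → ℝ => ∑ j, u j) ''
        (interior O ∩ {u | ∀ j, 0 ≤ u j})) = d)
    (hclo : sInf ((fun u : Fin N → ℝ => ∑ j, u j) ''
        (closure O ∩ {u | ∀ j, 0 ≤ u j})) = d) :
    Tendsto (fun ρ : ℝ =>
        Real.log ((μ {ω | (fun j => -Real.log (X j ω) / Real.log ρ) ∈ O}).toReal)
          / Real.log ρ)
      atTop (nhds (-d)) := by
  have hd0 : 0 ≤ d := by
    rw [← hint]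
    refine le_csInf hne ?_
    rintro x ⟨u, ⟨-, hu⟩, rfl⟩
    exact Finset.sum_nonneg fun j _ => hu j
  have hdle : ∀ u ∈ closure O, (∀ j, 0 ≤ u j) → d ≤ ∑ j, u j := by
    intro u hu1 hu2
    rw [← hclo]
    exact csInf_le ⟨0, by
        rintro x ⟨v, ⟨-, hv⟩, rfl⟩
        exact Finset.sum_nonneg fun j _ => hv j⟩
      ⟨u, ⟨hu1, hu2⟩, rfl⟩
  rw [Metric.tendsto_nhds]
  intro ε hε
  have hε2 : 0 < ε/2 := by positivity
  have hlt : sInf ((fun u : Fin N → ℝ => ∑ j, u j) ''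
      (interior O ∩ {u | ∀ j, 0 ≤ u j})) < d + ε/4 := by rw [hint]; linarith
  obtain ⟨t, ht, htlt⟩ := exists_lt_of_csInf_lt hne hlt
  obtain ⟨ustar, ⟨huint, hupos⟩, rfl⟩ := ht
  obtain ⟨r, hr, hball⟩ := Metric.isOpen_iff.mp isOpen_interior ustar huint
  have hballO : Metric.ball ustar r ⊆ O := fun x hx => interior_subset (hball hx)
  have hLB := Exp1Proof.lowerBound hX hindep hr hballO hupos
    (c := d + ε/2) (by linarith)
  have hUB := Exp1Proof.upperBound hX hindep hd0 hdle hε2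
  filter_upwards [hLB, hUB, eventually_gt_atTop 1] with ρ hlb hub hρ
  have hρ0 : (0:ℝ) < ρ := lt_trans one_pos hρ
  have hL : 0 < Real.log ρ := Real.log_pos hρ
  set P := μ {ω | (fun j => -Real.log (X j ω) / Real.log ρ) ∈ O} with hPdef
  have hPne : P ≠ ⊤ := measure_ne_top μ _
  have hlo : ρ ^ (-(d+ε/2)) ≤ P.toReal := (ENNReal.ofReal_le_iff_le_toReal hPne).mp hlb
  have hhi : P.toReal ≤ ρ ^ (-(d-ε/2)) :=
    ENNReal.toReal_le_of_le_ofReal (by positivity) hub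
  have hpos : 0 < P.toReal := lt_of_lt_of_le (Real.rpow_pos_of_pos hρ0 _) hlo
  have hlog1 : -(d+ε/2) * Real.log ρ ≤ Real.log P.toReal := by
    calc -(d+ε/2) * Real.log ρ = Real.log (ρ ^ (-(d+ε/2))) := (Real.log_rpow hρ0 _).symm
      _ ≤ Real.log P.toReal := Real.log_le_log (Real.rpow_pos_of_pos hρ0 _) hlo
  have hlog2 : Real.log P.toReal ≤ -(d-ε/2) * Real.log ρ := by
    calc Real.log P.toReal ≤ Real.log (ρ ^ (-(d-ε/2))) := Real.log_le_log hpos hhi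
      _ = -(d-ε/2) * Real.log ρ := Real.log_rpow hρ0 _
  rw [Real.dist_eq, abs_lt]
  have hq1 : -(d+ε/2) ≤ Real.log P.toReal / Real.log ρ := by
    rw [le_div_iff₀ hL]; linarith
  have hq2 : Real.log P.toReal / Real.log ρ ≤ -(d-ε/2) := by
    rw [div_le_iff₀ hL]; linarith
  constructor
  · linarith
  · linarith
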